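/- Let K ⊆ ℂ be a subfield, let G be a countable group with lcm(G) finite, and let (H_i)_{i∈I} be a directed family of subgroups of G (directed under inclusion) whose union is G, such that every H_i satisfies the strong Atiyah conjecture over K. Then G satisfies the strong Atiyah conjecture over K: rk_G(M) ∈ (1/lcm(G))·ℤ for every matrix M over K[G]. -/

import Mathlib

noncomputable section

open scoped ENNReal

local notation "⟪" x ", " y "⟫" => @inner ℂ _ _ x y

abbrev L2 (G : Type) : Type := lp (fun _ : G => ℂ) 2

def delta {G : Type} (g : G) : L2 G :=
  letI := Classical.decEq G
  lp.single 2 g 1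

theorem memℓp_comp_equiv {G : Type} (e : G ≃ G) (x : L2 G) :
    Memℓp (fun g => x (e g)) 2 := by
  have h2 : (0:ℝ) < (2:ℝ≥0∞).toReal := by norm_num
  rw [memℓp_gen_iff h2]
  exact (e.summable_iff (f := fun i => ‖x i‖ ^ (2:ℝ≥0∞).toReal)).2
    ((memℓp_gen_iff h2).1 (lp.memℓp x))

def lpShift {G : Type} (e : G ≃ G) : L2 G ≃ₗᵢ[ℂ] L2 G where
  toFun x := ⟨fun g => x (e g), memℓp_comp_equiv e x⟩
  invFun x := ⟨fun g => x (e.symm g), memℓp_comp_equiv e.symm x⟩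
  left_inv x := by apply Subtype.ext; funext g; simp
  right_inv x := by apply Subtype.ext; funext g; simp
  map_add' x y := by apply Subtype.ext; funext g; simp only [lp.coeFn_add]; rfl
  map_smul' c x := by apply Subtype.ext; funext g; simp [lp.coeFn_smul, Pi.smul_apply]
  norm_map' x := by
    have h2 : (0:ℝ) < (2:ℝ≥0∞).toReal := by norm_num
    rw [lp.norm_eq_tsum_rpow h2, lp.norm_eq_tsum_rpow h2]
    congr 1
    exact e.tsum_eq (f := fun g => ‖x g‖ ^ (2:ℝ≥0∞).toReal)

def Rop {G : Type} [Group G] (h : G) : L2 G →L[ℂ] L2 G :=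
  (lpShift (Equiv.mulRight h⁻¹)).toLinearIsometry.toContinuousLinearMap

/-- The bounded operator on ℓ²(G) given by right multiplication by an element of the
group algebra K[G], where K is a subfield of ℂ. -/
def rightMulAlg {G : Type} [Group G] {K : Subfield ℂ} (p : MonoidAlgebra K G) :
    L2 G →L[ℂ] L2 G :=
  p.coeff.sum fun g c => (c : ℂ) • Rop g

/-- The bounded operator ℓ²(G)ⁿ → ℓ²(G)ᵐ given by right multiplication by a matrix
over the group algebra K[G]. -/
def rightMulMat {G : Type} [Group G] {K : Subfield ℂ} {n m : ℕ}
    (M : Matrix (Fin n) (Fin m) (MonoidAlgebra K G)) :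
    PiLp 2 (fun _ : Fin n => L2 G) →L[ℂ] PiLp 2 (fun _ : Fin m => L2 G) :=
  ((PiLp.continuousLinearEquiv 2 ℂ (fun _ : Fin m => L2 G)).symm :
      (∀ _ : Fin m, L2 G) →L[ℂ] PiLp 2 (fun _ : Fin m => L2 G)) ∘L
    (ContinuousLinearMap.pi fun j : Fin m =>
      ∑ i : Fin n, (rightMulAlg (M i j)) ∘L (PiLp.proj 2 (fun _ : Fin n => L2 G) i))

/-- The vector (0, …, δ_e, …, 0) in ℓ²(G)ᵐ with δ_e in the j-th coordinate. -/
def deltaVec {G : Type} [Group G] {m : ℕ} (j : Fin m) : PiLp 2 (fun _ : Fin m => L2 G) :=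
  (PiLp.continuousLinearEquiv 2 ℂ (fun _ : Fin m => L2 G)).symm
    (Pi.single j (delta (1 : G)))

instance PiLpL2.completeSpace {G : Type} {m : ℕ} :
    CompleteSpace (PiLp 2 (fun _ : Fin m => L2 G)) :=
  inferInstance

/-- The von Neumann rank rk_G(M) of a matrix M over K[G]: the sum of the diagonal
entries ⟨P δ_e^{(j)}, δ_e^{(j)}⟩ where P is the orthogonal projection onto the closure
of the range of the right multiplication operator r_M. -/
def vnRank {G : Type} [Group G] {K : Subfield ℂ} {n m : ℕ}
    (M : Matrix (Fin n) (Fin m) (MonoidAlgebra K G)) : ℂ :=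
  haveI : CompleteSpace
      ↥(LinearMap.range (rightMulMat M :
          PiLp 2 (fun _ : Fin n => L2 G) →ₗ[ℂ] PiLp 2 (fun _ : Fin m => L2 G))).topologicalClosure :=
    (Submodule.isClosed_topologicalClosure _).completeSpace_coe
  ∑ j : Fin m,
    ⟪deltaVec j,
      ((Submodule.orthogonalProjectionOnto
        (LinearMap.range (rightMulMat M :
          PiLp 2 (fun _ : Fin n => L2 G) →ₗ[ℂ] PiLp 2 (fun _ : Fin m => L2 G))).topologicalClosure
        (deltaVec j) : PiLp 2 (fun _ : Fin m => L2 G)))⟫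

/-- The set of orders of finite subgroups of G. -/
def finiteSubgroupOrders (G : Type) [Group G] : Set ℕ :=
  {k | ∃ H : Subgroup G, (H : Set G).Finite ∧ k = Nat.card H}

/-- lcm(G): the least common multiple of the orders of the finite subgroups of G
(defined to be 0 if there are infinitely many such orders). -/
def lcmOrders (G : Type) [Group G] : ℕ :=
  letI := Classical.dec ((finiteSubgroupOrders G).Finite)
  if h : (finiteSubgroupOrders G).Finite then h.toFinset.lcm id else 0

/-- G satisfies the strong Atiyah conjecture over the subfield K ⊆ ℂ:
lcm(G) is finite and every matrix over K[G] has von Neumann rank in (1/lcm(G))·ℤ. -/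
def SatisfiesStrongAtiyah (K : Subfield ℂ) (G : Type) [Group G] : Prop :=
  (finiteSubgroupOrders G).Finite ∧
    ∀ (n m : ℕ) (M : Matrix (Fin n) (Fin m) (MonoidAlgebra K G)),
      ∃ z : ℤ, vnRank M = (z : ℂ) / (lcmOrders G : ℂ)

open scoped Classical

namespace AtiyahAux

variable {G : Type} [Group G]

theorem memℓp_extend (H : Subgroup G) (x : L2 ↥H) :
    Memℓp (fun g : G => if h : g ∈ H then x ⟨g, h⟩ else 0) 2 := by
  have h2 : (0:ℝ) < (2:ℝ≥0∞).toReal := by norm_num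
  rw [memℓp_gen_iff h2]
  have hx : Summable fun h : ↥H => ‖x h‖ ^ (2:ℝ≥0∞).toReal := (memℓp_gen_iff h2).1 (lp.memℓp x)
  have hcomp : (fun g : G => ‖(if h : g ∈ H then x ⟨g, h⟩ else 0 : ℂ)‖ ^ (2:ℝ≥0∞).toReal) ∘ (Subtype.val) = fun h : ↥H => ‖x h‖ ^ (2:ℝ≥0∞).toReal := by
    funext h
    simp
  refine (Function.Injective.hasSum_iff (f := fun g : G => ‖(if h : g ∈ H then x ⟨g, h⟩ else 0 : ℂ)‖ ^ (2:ℝ≥0∞).toReal) Subtype.val_injective ?_).1 (hcomp ▸ hx.hasSum) |>.summable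
  · intro g hg
    have : g ∉ H := by simpa [Subtype.range_coe] using hg
    simp [this, Real.zero_rpow h2.ne']

/-- Extension by zero from ℓ²(H) to ℓ²(G). -/
def extH (H : Subgroup G) : L2 ↥H →ₗᵢ[ℂ] L2 G where
  toFun x := ⟨fun g => if h : g ∈ H then x ⟨g, h⟩ else 0, memℓp_extend H x⟩
  map_add' x y := by
    apply Subtype.ext; funext g
    show (if h : g ∈ H then (x + y) ⟨g, h⟩ else 0) =
      (if h : g ∈ H then x ⟨g, h⟩ else 0) + (if h : g ∈ H then y ⟨g, h⟩ else 0)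
    by_cases h : g ∈ H <;> simp [h, lp.coeFn_add]
  map_smul' c x := by
    apply Subtype.ext; funext g
    show (if h : g ∈ H then (c • x) ⟨g, h⟩ else 0) = c • (if h : g ∈ H then x ⟨g, h⟩ else 0)
    by_cases h : g ∈ H <;> simp [h, lp.coeFn_smul]
  norm_map' x := by
    have h2 : (0:ℝ) < (2:ℝ≥0∞).toReal := by norm_num
    rw [lp.norm_eq_tsum_rpow h2, lp.norm_eq_tsum_rpow h2]
    congr 1
    have hsupp : Function.support (fun g : G => ‖(if h : g ∈ H then x ⟨g, h⟩ else 0 : ℂ)‖ ^ (2:ℝ≥0∞).toReal) ⊆ Set.range (Subtype.val : ↥H → G) := by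
      intro g hg
      by_contra hc
      have hgH : g ∉ H := by simpa [Subtype.range_coe] using hc
      apply hg
      simp [hgH, Real.zero_rpow (by norm_num : (2:ℝ≥0∞).toReal ≠ 0)]
    have key := Function.Injective.tsum_eq Subtype.val_injective hsupp
    change ∑' (g : G), ‖(if h : g ∈ H then x ⟨g, h⟩ else 0 : ℂ)‖ ^ (2:ℝ≥0∞).toReal = _
    rw [← key]
    congr 1
    funext h
    simp

@[simp] theorem extH_apply (H : Subgroup G) (x : L2 ↥H) (g : G) :
    (extH H x) g = if h : g ∈ H then x ⟨g, h⟩ else 0 := rfl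

theorem extH_apply_mem (H : Subgroup G) (x : L2 ↥H) (h : ↥H) :
    (extH H x) (h : G) = x h := by
  rw [extH_apply, dif_pos h.2]

theorem extH_apply_not_mem (H : Subgroup G) (x : L2 ↥H) {g : G} (hg : g ∉ H) :
    (extH H x) g = 0 := by
  rw [extH_apply, dif_neg hg]

theorem memℓp_res (H : Subgroup G) (x : L2 G) :
    Memℓp (fun h : ↥H => x (h : G)) 2 := by
  have h2 : (0:ℝ) < (2:ℝ≥0∞).toReal := by norm_num
  rw [memℓp_gen_iff h2]
  exact ((memℓp_gen_iff h2).1 (lp.memℓp x)).comp_injective Subtype.val_injective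

/-- Restriction from ℓ²(G) to ℓ²(H). -/
def resH (H : Subgroup G) (x : L2 G) : L2 ↥H :=
  ⟨fun h => x (h : G), memℓp_res H x⟩

@[simp] theorem resH_apply (H : Subgroup G) (x : L2 G) (h : ↥H) :
    (resH H x) h = x (h : G) := rfl

theorem Rop_apply {h : G} (w : L2 G) (g : G) : (Rop h w) g = w (g * h⁻¹) := rfl

/-- Intertwining for Rop. -/
theorem extH_Rop (H : Subgroup G) (h : ↥H) (x : L2 ↥H) :
    extH H (Rop h x) = Rop (h : G) (extH H x) := by
  apply Subtype.ext; funext g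
  show (extH H (Rop h x)) g = (Rop (h : G) (extH H x)) g
  rw [Rop_apply, extH_apply, extH_apply]
  by_cases hg : g ∈ H
  · rw [dif_pos hg, dif_pos (H.mul_mem hg (H.inv_mem h.2))]
    rw [Rop_apply]
    congr 1
  · rw [dif_neg hg, dif_neg]
    intro hc
    exact hg (by simpa using H.mul_mem hc h.2)

variable {K : Subfield ℂ}

theorem clm_finsupp_sum_apply {α M E F : Type*} [Zero M] [NormedAddCommGroup E] [NormedSpace ℂ E]
    [NormedAddCommGroup F] [NormedSpace ℂ F] (q : α →₀ M)
    (Φ : α → M → (E →L[ℂ] F)) (x : E) :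
    (q.sum Φ) x = q.sum (fun a c => Φ a c x) := by
  simp [Finsupp.sum, ContinuousLinearMap.sum_apply]

theorem rightMulAlg_apply_pt (p : MonoidAlgebra K G) (w : L2 G) (g : G) :
    (rightMulAlg p w) g = p.coeff.sum (fun a c => (c : ℂ) * w (g * a⁻¹)) := by
  rw [rightMulAlg, clm_finsupp_sum_apply]
  rw [Finsupp.sum, Finsupp.sum]
  rw [lp.coeFn_sum]
  rw [Finset.sum_apply]
  refine Finset.sum_congr rfl (fun a _ => ?_)
  rw [ContinuousLinearMap.smul_apply, lp.coeFn_smul, Pi.smul_apply, Rop_apply]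
  simp [smul_eq_mul]

/-- r_p maps functions vanishing on H to functions vanishing on H, when supp p ⊆ H. -/
theorem rightMulAlg_vanish (H : Subgroup G) (p : MonoidAlgebra K G)
    (hp : ∀ a ∈ p.coeff.support, a ∈ H) (w : L2 G) (hw : ∀ g ∈ H, w g = 0)
    {g : G} (hg : g ∈ H) : (rightMulAlg p w) g = 0 := by
  rw [rightMulAlg_apply_pt, Finsupp.sum]
  refine Finset.sum_eq_zero (fun a ha => ?_)
  rw [hw _ (H.mul_mem hg (H.inv_mem (hp a ha))), mul_zero]

/-- Intertwining for rightMulAlg. -/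
theorem extH_rightMulAlg (H : Subgroup G) (p : MonoidAlgebra K G)
    (hp : ∀ a ∈ p.coeff.support, a ∈ H) (x : L2 ↥H) :
    extH H (rightMulAlg (MonoidAlgebra.ofCoeff (p.coeff.subtypeDomain (· ∈ H))) x) = rightMulAlg p (extH H x) := by
  rw [rightMulAlg, rightMulAlg, clm_finsupp_sum_apply, clm_finsupp_sum_apply]
  have key : ∀ (a : ↥H) (c : K), extH H (((c:ℂ) • Rop a) x) = ((c:ℂ) • Rop (a:G)) (extH H x) := by
    intro a c
    rw [ContinuousLinearMap.smul_apply, ContinuousLinearMap.smul_apply, map_smul, extH_Rop]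
  calc extH H ((p.coeff.subtypeDomain (· ∈ H)).sum fun a c => ((c:ℂ) • Rop a) x)
      = (p.coeff.subtypeDomain (· ∈ H)).sum (fun a c => extH H (((c:ℂ) • Rop a) x)) := by
        rw [Finsupp.sum, Finsupp.sum, map_sum]
    _ = (p.coeff.subtypeDomain (· ∈ H)).sum (fun a c => ((c:ℂ) • Rop (a:G)) (extH H x)) :=
        Finsupp.sum_congr (fun a _ => key a _)
    _ = p.coeff.sum (fun a c => ((c:ℂ) • Rop a) (extH H x)) :=
        Finsupp.sum_subtypeDomain_index (p := (· ∈ H))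
          (h := fun (a : G) (c : K) => ((c:ℂ) • Rop a) (extH H x)) hp

theorem delta_apply (a j : G) : (delta a : L2 G) j = if j = a then 1 else 0 := by
  rw [delta, lp.single_apply]
  simp [Pi.single_apply]

/-- Componentwise extension on ℓ²(G)^m. -/
def extV (H : Subgroup G) (m : ℕ) :
    PiLp 2 (fun _ : Fin m => L2 ↥H) →ₗᵢ[ℂ] PiLp 2 (fun _ : Fin m => L2 G) where
  toFun x := WithLp.toLp 2 (fun j => extH H (x j))
  map_add' x y := by
    apply PiLp.ext; intro j
    show extH H ((x + y) j) = extH H (x j) + extH H (y j)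
    rw [show (x + y) j = x j + y j from rfl, map_add]
  map_smul' c x := by
    apply PiLp.ext; intro j
    show extH H ((c • x) j) = c • extH H (x j)
    rw [show (c • x) j = c • x j from rfl, map_smul]
  norm_map' x := by
    have hp : (0:ℝ) < (2:ℝ≥0∞).toReal := by norm_num
    rw [PiLp.norm_eq_sum hp, PiLp.norm_eq_sum hp]
    congr 1
    refine Finset.sum_congr rfl (fun j _ => ?_)
    show ‖extH H (x j)‖ ^ (2:ℝ≥0∞).toReal = ‖x j‖ ^ (2:ℝ≥0∞).toReal
    rw [(extH H).norm_map]

@[simp] theorem extV_apply (H : Subgroup G) {m : ℕ} (x : PiLp 2 (fun _ : Fin m => L2 ↥H))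
    (j : Fin m) : extV H m x j = extH H (x j) := rfl

theorem rightMulMat_apply {n m : ℕ} (M : Matrix (Fin n) (Fin m) (MonoidAlgebra K G))
    (v : PiLp 2 (fun _ : Fin n => L2 G)) (j : Fin m) :
    rightMulMat M v j = ∑ i, rightMulAlg (M i j) (v i) := by
  show (ContinuousLinearMap.pi fun j : Fin m =>
      ∑ i : Fin n, (rightMulAlg (M i j)) ∘L (PiLp.proj 2 (fun _ : Fin n => L2 G) i)) v j = _
  rw [ContinuousLinearMap.pi_apply, ContinuousLinearMap.sum_apply]
  rfl

theorem deltaVec_apply {m : ℕ} (j i : Fin m) :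
    (deltaVec (G := G) j) i = (Pi.single j (delta (1:G)) : ∀ _ : Fin m, L2 G) i := rfl

theorem extH_delta_one (H : Subgroup G) : extH H (delta 1) = delta (1 : G) := by
  apply Subtype.ext; funext g
  show (extH H (delta 1)) g = (delta (1:G)) g
  rw [extH_apply, delta_apply]
  by_cases hg : g ∈ H
  · rw [dif_pos hg, delta_apply]
    by_cases h1 : g = 1 <;> simp [h1, Subtype.ext_iff]
  · rw [dif_neg hg, if_neg (fun h => hg (by rw [h]; exact H.one_mem))]

theorem extV_deltaVec (H : Subgroup G) {m : ℕ} (j : Fin m) :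
    extV H m (deltaVec j) = deltaVec j := by
  apply PiLp.ext; intro i
  show extH H ((deltaVec (G := ↥H) j) i) = (deltaVec (G := G) j) i
  rw [deltaVec_apply, deltaVec_apply]
  by_cases hij : i = j
  · subst hij
    rw [Pi.single_eq_same, Pi.single_eq_same, extH_delta_one]
  · rw [Pi.single_eq_of_ne hij, Pi.single_eq_of_ne hij, map_zero]

theorem extV_rightMulMat (H : Subgroup G) {n m : ℕ}
    (M : Matrix (Fin n) (Fin m) (MonoidAlgebra K G))
    (hs : ∀ i j, ∀ a ∈ (M i j).coeff.support, a ∈ H)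
    (x : PiLp 2 (fun _ : Fin n => L2 ↥H)) :
    extV H m (rightMulMat (Matrix.of fun i j => MonoidAlgebra.ofCoeff ((M i j).coeff.subtypeDomain (· ∈ H))) x) =
      rightMulMat M (extV H n x) := by
  apply PiLp.ext; intro j
  show extH H ((rightMulMat (Matrix.of fun i j => MonoidAlgebra.ofCoeff ((M i j).coeff.subtypeDomain (· ∈ H))) x) j) = _
  rw [rightMulMat_apply, rightMulMat_apply, map_sum]
  refine Finset.sum_congr rfl (fun i _ => ?_)
  show extH H (rightMulAlg (MonoidAlgebra.ofCoeff ((M i j).coeff.subtypeDomain (· ∈ H))) (x i)) = rightMulAlg (M i j) (extV H n x i)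
  rw [extH_rightMulAlg H (M i j) (hs i j)]
  rfl

theorem inner_L2_eq_zero_of_disjoint (H : Subgroup G) (a b : L2 G)
    (ha : ∀ g, g ∉ H → a g = 0) (hb : ∀ g ∈ H, b g = 0) : ⟪a, b⟫ = 0 := by
  rw [lp.inner_eq_tsum]
  have : ∀ g : G, ⟪a g, b g⟫ = 0 := by
    intro g
    by_cases hg : g ∈ H
    · rw [hb g hg, inner_zero_right]
    · rw [ha g hg, inner_zero_left]
  simp only [this]
  exact tsum_zero

theorem extV_vanish (H : Subgroup G) {m : ℕ} (x : PiLp 2 (fun _ : Fin m => L2 ↥H))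
    (j : Fin m) {g : G} (hg : g ∉ H) : (extV H m x j) g = 0 := by
  rw [extV_apply]
  exact extH_apply_not_mem H (x j) hg

theorem vnRank_eq_of_support_subset (H : Subgroup G) {n m : ℕ}
    (M : Matrix (Fin n) (Fin m) (MonoidAlgebra K G))
    (hs : ∀ i j, ∀ a ∈ (M i j).coeff.support, a ∈ H) :
    vnRank M = vnRank (Matrix.of fun i j => MonoidAlgebra.ofCoeff ((M i j).coeff.subtypeDomain (· ∈ H))) := by
  unfold vnRank
  set M' := Matrix.of fun i j => MonoidAlgebra.ofCoeff ((M i j).coeff.subtypeDomain (· ∈ H)) with hM'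
  set R : Submodule ℂ (PiLp 2 (fun _ : Fin m => L2 G)) :=
    LinearMap.range (rightMulMat M :
      PiLp 2 (fun _ : Fin n => L2 G) →ₗ[ℂ] PiLp 2 (fun _ : Fin m => L2 G)) with hR
  set R' : Submodule ℂ (PiLp 2 (fun _ : Fin m => L2 ↥H)) :=
    LinearMap.range (rightMulMat M' :
      PiLp 2 (fun _ : Fin n => L2 ↥H) →ₗ[ℂ] PiLp 2 (fun _ : Fin m => L2 ↥H)) with hR'
  set U := R.topologicalClosure with hU
  set U' := R'.topologicalClosure with hU'
  haveI : CompleteSpace ↥U := (Submodule.isClosed_topologicalClosure _).completeSpace_coe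
  haveI : CompleteSpace ↥U' := (Submodule.isClosed_topologicalClosure _).completeSpace_coe
  have key : ∀ j : Fin m,
      (U.orthogonalProjectionOnto (deltaVec j) : PiLp 2 (fun _ : Fin m => L2 G)) =
        extV H m (U'.orthogonalProjectionOnto (deltaVec j) : PiLp 2 (fun _ : Fin m => L2 ↥H)) := by
    intro j
    set y' : PiLp 2 (fun _ : Fin m => L2 ↥H) :=
      (U'.orthogonalProjectionOnto (deltaVec j) : PiLp 2 (fun _ : Fin m => L2 ↥H)) with hy'
    have hRR' : R'.map ((extV H m).toContinuousLinearMap :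
        PiLp 2 (fun _ : Fin m => L2 ↥H) →ₗ[ℂ] PiLp 2 (fun _ : Fin m => L2 G)) ≤ R := by
      rintro _ ⟨_, ⟨v, rfl⟩, rfl⟩
      exact ⟨extV H n v, (extV_rightMulMat H M hs v).symm⟩
    rw [← Submodule.starProjection_apply]
    apply Submodule.eq_starProjection_of_mem_of_inner_eq_zero
    · -- membership
      have h1 : y' ∈ U' := SetLike.coe_mem _
      have hmap : U'.map ((extV H m).toContinuousLinearMap :
          PiLp 2 (fun _ : Fin m => L2 ↥H) →ₗ[ℂ] PiLp 2 (fun _ : Fin m => L2 G)) ≤ U :=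
        le_trans (Submodule.topologicalClosure_map (extV H m).toContinuousLinearMap R')
          (Submodule.topologicalClosure_mono hRR')
      exact hmap (Submodule.mem_map_of_mem h1)
    · -- orthogonality
      set D := deltaVec j - extV H m y' with hDdef
      have hD : D = extV H m (deltaVec j - y') := by
        rw [hDdef, map_sub, extV_deltaVec]
      have hUle : U ≤ (ℂ ∙ D)ᗮ := by
        refine Submodule.topologicalClosure_minimal _ ?_ (Submodule.isClosed_orthogonal _)
        rintro _ ⟨v, rfl⟩
        rw [Submodule.mem_orthogonal_singleton_iff_inner_right]
        set v' : PiLp 2 (fun _ : Fin n => L2 ↥H) := WithLp.toLp 2 (fun i => resH H (v i)) with hv'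
        have hsplit : (rightMulMat M :
            PiLp 2 (fun _ : Fin n => L2 G) →ₗ[ℂ] PiLp 2 (fun _ : Fin m => L2 G)) v
            = rightMulMat M (extV H n v') + rightMulMat M (v - extV H n v') := by
          rw [← map_add]
          show rightMulMat M v = rightMulMat M (extV H n v' + (v - extV H n v'))
          rw [add_sub_cancel]
        rw [hsplit, inner_add_right]
        have t1 : ⟪D, rightMulMat M (extV H n v')⟫ = 0 := by
          rw [← extV_rightMulMat H M hs v', hD, LinearIsometry.inner_map_map]
          have hy'mem : deltaVec j - y' ∈ U'ᗮ := Submodule.sub_starProjection_mem_orthogonal _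
          have hr : rightMulMat M' v' ∈ U' := R'.le_topologicalClosure ⟨v', rfl⟩
          exact (Submodule.mem_orthogonal' _ _).1 hy'mem _ hr
        have t2 : ⟪D, rightMulMat M (v - extV H n v')⟫ = 0 := by
          rw [hD, PiLp.inner_apply]
          apply Finset.sum_eq_zero
          intro j' _
          apply inner_L2_eq_zero_of_disjoint H
          · intro g hg
            exact extV_vanish H _ j' hg
          · intro g hg
            rw [rightMulMat_apply, lp.coeFn_sum, Finset.sum_apply]
            apply Finset.sum_eq_zero
            intro i _
            refine rightMulAlg_vanish H (M i j') (hs i j') _ ?_ hg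
            intro g' hg'
            show ((v - extV H n v') i) g' = 0
            have : ((v - extV H n v') i) = v i - extV H n v' i := rfl
            rw [this, lp.coeFn_sub, Pi.sub_apply, extV_apply, extH_apply, dif_pos hg',
              resH_apply, sub_self]
        rw [t1, t2, add_zero]
      intro w hw
      exact Submodule.mem_orthogonal_singleton_iff_inner_right.1 (hUle hw)
  refine Finset.sum_congr rfl (fun j _ => ?_)
  rw [key j, ← extV_deltaVec H j, LinearIsometry.inner_map_map]

theorem lcmOrders_eq {G : Type} [Group G] (h : (finiteSubgroupOrders G).Finite) :
    lcmOrders G = h.toFinset.lcm id := by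
  rw [lcmOrders, dif_pos h]

theorem finiteSubgroupOrders_subgroup_subset (H : Subgroup G) :
    finiteSubgroupOrders ↥H ⊆ finiteSubgroupOrders G := by
  rintro k ⟨H', hfin, rfl⟩
  refine ⟨H'.map H.subtype, ?_, ?_⟩
  · rw [Subgroup.coe_map]
    exact hfin.image _
  · exact (Nat.card_congr ((Equiv.setCongr (Subgroup.coe_map H.subtype H')).trans
      (Equiv.Set.image _ _ H.subtype_injective).symm)).symm

theorem lcmOrders_ne_zero {G : Type} [Group G] (h : (finiteSubgroupOrders G).Finite) :
    lcmOrders G ≠ 0 := by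
  rw [lcmOrders_eq h, Ne, Finset.lcm_eq_zero_iff]
  rintro ⟨b, hb, hb0⟩
  rw [Set.Finite.mem_toFinset] at hb
  obtain ⟨H', hfin, rfl⟩ := hb
  haveI : Finite ↥H' := hfin.to_subtype
  haveI : Nonempty ↥H' := ⟨⟨1, H'.one_mem⟩⟩
  exact absurd hb0 (by simpa using (Nat.card_pos (α := ↥H')).ne')

theorem lcmOrders_subgroup_dvd (H : Subgroup G)
    (hG : (finiteSubgroupOrders G).Finite) (hHf : (finiteSubgroupOrders ↥H).Finite) :
    lcmOrders ↥H ∣ lcmOrders G := by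
  rw [lcmOrders_eq hHf, lcmOrders_eq hG]
  refine Finset.lcm_dvd (fun b hb => ?_)
  rw [Set.Finite.mem_toFinset] at hb
  exact Finset.dvd_lcm (hG.mem_toFinset.2 (finiteSubgroupOrders_subgroup_subset H hb))

theorem exists_subgroup_finset {I : Type} (H : I → Subgroup G)
    (hdir : ∀ i j : I, ∃ k : I, H i ≤ H k ∧ H j ≤ H k)
    (hcover : ∀ g : G, ∃ i : I, g ∈ H i) (s : Finset G) :
    ∃ k : I, ∀ g ∈ s, g ∈ H k := by
  classical
  induction s using Finset.induction_on with
  | empty =>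
    obtain ⟨i, _⟩ := hcover 1
    exact ⟨i, by simp⟩
  | @insert a s ha ih =>
    obtain ⟨k₀, hk₀⟩ := ih
    obtain ⟨i, hi⟩ := hcover a
    obtain ⟨k, h1, h2⟩ := hdir i k₀
    refine ⟨k, fun g hg => ?_⟩
    rcases Finset.mem_insert.1 hg with rfl | hg'
    · exact h1 hi
    · exact h2 (hk₀ g hg')

end AtiyahAux


/-- Let `K ⊆ ℂ` be a subfield and `G` a countable group with finite
`lcm(G)` which is the directed union of a family of subgroups each satisfying the strong
Atiyah conjecture over `K`. Then `G` satisfies the strong Atiyah conjecture over `K`. -/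
theorem strong_atiyah_of_directed_union
    (K : Subfield ℂ)
    (G : Type) [Group G] [Countable G]
    (hlcm : (finiteSubgroupOrders G).Finite)
    (I : Type) (H : I → Subgroup G)
    (hdir : ∀ i j : I, ∃ k : I, H i ≤ H k ∧ H j ≤ H k)
    (hcover : ∀ g : G, ∃ i : I, g ∈ H i)
    (hH : ∀ i : I, SatisfiesStrongAtiyah K ↥(H i)) :
    SatisfiesStrongAtiyah K G := by
  classical
  refine ⟨hlcm, fun n m M => ?_⟩
  obtain ⟨k, hk⟩ := AtiyahAux.exists_subgroup_finset H hdir hcover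
    ((Finset.univ : Finset (Fin n × Fin m)).biUnion fun ij => (M ij.1 ij.2).coeff.support)
  have hs : ∀ i j, ∀ a ∈ (M i j).coeff.support, a ∈ H k := by
    intro i j a ha
    exact hk a (Finset.mem_biUnion.2 ⟨(i, j), Finset.mem_univ _, ha⟩)
  obtain ⟨hfin, hA⟩ := hH k
  obtain ⟨z, hz⟩ := hA n m (Matrix.of fun i j => MonoidAlgebra.ofCoeff ((M i j).coeff.subtypeDomain (· ∈ H k)))
  have hrank := AtiyahAux.vnRank_eq_of_support_subset (H k) M hs
  obtain ⟨d, hd⟩ := AtiyahAux.lcmOrders_subgroup_dvd (H k) hlcm hfin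
  have hG0 : lcmOrders G ≠ 0 := AtiyahAux.lcmOrders_ne_zero hlcm
  have hH0 : lcmOrders ↥(H k) ≠ 0 := AtiyahAux.lcmOrders_ne_zero hfin
  have hd0 : d ≠ 0 := by
    rintro rfl
    exact hG0 (by rw [hd, mul_zero])
  refine ⟨z * d, ?_⟩
  rw [hrank, hz, hd]
  have hH0' : ((lcmOrders ↥(H k) : ℕ) : ℂ) ≠ 0 := Nat.cast_ne_zero.2 hH0
  have hd0' : ((d : ℕ) : ℂ) ≠ 0 := Nat.cast_ne_zero.2 hd0
  have hcast : ((lcmOrders ↥(H k) * d : ℕ) : ℂ) = (lcmOrders ↥(H k) : ℂ) * (d : ℂ) := by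
    push_cast; ring
  rw [hcast]
  push_cast
  rw [div_eq_div_iff hH0' (mul_ne_zero hH0' hd0')]
  ring

end
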